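/- Let T be a compact Hausdorff topological semigroup. Then the graph of the inversion on the Clifford part, Gr = {(x,y) ∈ T × T : xyx = x, yxy = y, xy = yx}, is a compact subset of T × T, and consequently the inversion inv : H(T) → H(T) is continuous. -/

import Mathlib

open Filter Topology

variable {S : Type*}

/-- `spow x n` is `x ^ n` for `n ≥ 1` in a semigroup (with junk value `x` at `0`). -/
def spow {S : Type*} [Mul S] (x : S) : ℕ → S
  | 0 => x
  | 1 => x
  | n + 2 => spow x (n + 1) * x

/-- An element of a topological semigroup is topologically periodic if every open
neighbourhood of `x` contains `x ^ n` for some `n ≥ 2`. -/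
def TopPeriodic {S : Type*} [Mul S] [TopologicalSpace S] (x : S) : Prop :=
  ∀ U : Set S, IsOpen U → x ∈ U → ∃ n : ℕ, 2 ≤ n ∧ spow x n ∈ U

/-- The Clifford part `H(S)` of a semigroup: the union of all maximal subgroups. -/
def HSet (S : Type*) [Mul S] : Set S :=
  {x | ∃ y, x * y = y * x ∧ x * y * x = x ∧ y * x * y = y}

/-- The maximal subgroup `H(e)` of a semigroup with identity the idempotent `e`. -/
def Hgrp (S : Type*) [Mul S] (e : S) : Set S :=
  {x | ∃ y, x * y = e ∧ y * x = e ∧ x * e = x ∧ e * x = x ∧ y * e = y ∧ e * y = y}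

/-- `inv` is the inversion map on the Clifford part `H(S)`: it sends each element of a
maximal subgroup to its (unique) commuting inverse. -/
def IsInvMap (S : Type*) [Mul S] (inv : S → S) : Prop :=
  ∀ x ∈ HSet S, x * inv x = inv x * x ∧ x * inv x * x = x ∧ inv x * x * inv x = inv x

/-- A topological space is countably compact if every countable open cover admits a
finite subcover. -/
def CountablyCompactSpace' (X : Type*) [TopologicalSpace X] : Prop :=
  ∀ U : ℕ → Set X, (∀ n, IsOpen (U n)) → (⋃ n, U n) = Set.univ →
    ∃ F : Finset ℕ, (⋃ n ∈ F, U n) = Set.univ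

/-- A subset of a topological space is countably compact (as a subspace) if every
countable cover by open sets of the ambient space admits a finite subcover. -/
def CountablyCompactIn {X : Type*} [TopologicalSpace X] (A : Set X) : Prop :=
  ∀ U : ℕ → Set X, (∀ n, IsOpen (U n)) → A ⊆ ⋃ n, U n →
    ∃ F : Finset ℕ, A ⊆ ⋃ n ∈ F, U n

/-- A topological space is pseudocompact if every continuous real-valued function on it
is bounded. -/
def Pseudocompact (X : Type*) [TopologicalSpace X] : Prop :=
  ∀ f : X → ℝ, Continuous f → ∃ M : ℝ, ∀ x, |f x| ≤ M


lemma uniq_inv {T : Type*} [Semigroup T] {x y z : T}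
    (hy1 : x * y * x = x) (hy2 : y * x * y = y) (hy3 : x * y = y * x)
    (hz1 : x * z * x = x) (hz2 : z * x * z = z) (hz3 : x * z = z * x) :
    y = z := by
  have hxf : x * (x * z) = x := by rw [hz3, ← mul_assoc, hz1]
  have hef : (x * y) * (x * z) = x * z := by rw [← mul_assoc, hy1]
  have hef2 : (x * y) * (x * z) = x * y := by
    rw [hy3, mul_assoc, hxf]
  have he : x * y = x * z := by rw [← hef2, hef]
  calc y = y * x * y := hy2.symm
    _ = y * (x * y) := by rw [mul_assoc]
    _ = y * (x * z) := by rw [he]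
    _ = (y * x) * z := by rw [mul_assoc]
    _ = (x * z) * z := by rw [← hy3, he]
    _ = (z * x) * z := by rw [hz3]
    _ = z := hz2

theorem stmt16 {T : Type*} [Semigroup T] [TopologicalSpace T] [ContinuousMul T]
    [CompactSpace T] [T2Space T]
    (inv : T → T) (hinv : IsInvMap T inv) :
    IsCompact {p : T × T | p.1 * p.2 * p.1 = p.1 ∧ p.2 * p.1 * p.2 = p.2 ∧
        p.1 * p.2 = p.2 * p.1} ∧
      ContinuousOn inv (HSet T) := by
  set Gr : Set (T × T) := {p : T × T | p.1 * p.2 * p.1 = p.1 ∧ p.2 * p.1 * p.2 = p.2 ∧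
      p.1 * p.2 = p.2 * p.1} with hGrdef
  have hclosed : IsClosed Gr := by
    have h1 : IsClosed {p : T × T | p.1 * p.2 * p.1 = p.1} :=
      isClosed_eq (by fun_prop) continuous_fst
    have h2 : IsClosed {p : T × T | p.2 * p.1 * p.2 = p.2} :=
      isClosed_eq (by fun_prop) continuous_snd
    have h3 : IsClosed {p : T × T | p.1 * p.2 = p.2 * p.1} :=
      isClosed_eq (by fun_prop) (by fun_prop)
    exact h1.inter (h2.inter h3)
  have hcomp : IsCompact Gr := hclosed.isCompact
  refine ⟨hcomp, ?_⟩
  have : CompactSpace Gr := isCompact_iff_compactSpace.mp hcomp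
  have hmem : ∀ x ∈ HSet T, (x, inv x) ∈ Gr := by
    intro x hx
    obtain ⟨h1, h2, h3⟩ := hinv x hx
    exact ⟨h2, h3, h1⟩
  let h : Gr → HSet T := fun p => ⟨p.1.1, p.1.2, p.2.2.2, p.2.1, p.2.2.1⟩
  have hcont : Continuous h :=
    Continuous.subtype_mk (continuous_fst.comp continuous_subtype_val) _
  have hbij : Function.Bijective h := by
    constructor
    · rintro ⟨⟨x, y⟩, hy1, hy2, hy3⟩ ⟨⟨x', z⟩, hz1, hz2, hz3⟩ hxx
      have hx : x = x' := congrArg Subtype.val hxx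
      subst hx
      have := uniq_inv hy1 hy2 hy3 hz1 hz2 hz3
      exact Subtype.ext (Prod.ext rfl this)
    · rintro ⟨x, hx⟩
      exact ⟨⟨(x, inv x), hmem x hx⟩, rfl⟩
  let e := Continuous.homeoOfEquivCompactToT2 (f := Equiv.ofBijective h hbij) hcont
  have hsymm : ∀ x : HSet T, ((e.symm x : Gr) : T × T).2 = inv x := by
    intro x
    have hef : e ⟨(x.1, inv x.1), hmem x.1 x.2⟩ = x := Subtype.ext rfl
    have := congrArg e.symm hef
    rw [Homeomorph.symm_apply_apply] at this
    rw [← this]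
  rw [continuousOn_iff_continuous_restrict]
  have : (HSet T).domRestrict inv = fun x : HSet T => ((e.symm x : Gr) : T × T).2 := by
    funext x
    exact (hsymm x).symm
  rw [this]
  exact continuous_snd.comp (continuous_subtype_val.comp e.symm.continuous)
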